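/- If W is a palindrome of length at least 2 and W is rich, then the longest proper palindromic suffix U of W is the longest repeated suffix of W, so that K_W = |U| + 1. -/

import Mathlib

open List

variable {α : Type*} [DecidableEq α]

/-- The set of factors (contiguous subwords) of `W`. -/
def factorFinset (W : List α) : Finset (List α) := (W.inits.flatMap List.tails).toFinset

/-- A palindrome is a word equal to its reversal. -/
def Pal (u : List α) : Prop := u.reverse = u

instance : DecidablePred (Pal : List α → Prop) :=
  fun u => inferInstanceAs (Decidable (u.reverse = u))

/-- The set of palindromic factors of `W` (including the empty word). -/
def palFactorFinset (W : List α) : Finset (List α) := (factorFinset W).filter Pal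

/-- Subword complexity: the number of distinct factors of `W` of length `n`. -/
def C (W : List α) (n : ℕ) : ℕ := ((factorFinset W).filter (fun u => u.length = n)).card

/-- Palindromic complexity: number of distinct palindromic factors of `W` of length `n`. -/
def P (W : List α) (n : ℕ) : ℕ := ((palFactorFinset W).filter (fun u => u.length = n)).card

/-- A word is rich if it has exactly `|W| + 1` distinct palindromic factors. -/
def Rich (W : List α) : Prop := (palFactorFinset W).card = W.length + 1

/-- Number of occurrences of `u` as a factor of `W`. -/
def occ (u W : List α) : ℕ := ((List.range (W.length + 1)).filter (fun i => u <+: W.drop i)).length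

/-- `Z` is a complete return to `u` in `W`: a factor of `W` with exactly two
occurrences of `u`, one as a prefix and one as a suffix. -/
def CompleteReturn (u Z W : List α) : Prop := Z <:+: W ∧ u <+: Z ∧ u <:+ Z ∧ occ u Z = 2

/-- `u` is a right special factor of `W`. -/
def RightSpecial (u W : List α) : Prop :=
  ∃ x y : α, x ≠ y ∧ (u ++ [x]) <:+: W ∧ (u ++ [y]) <:+: W

/-- `R_W`: the smallest `p` such that `W` has no right special factor of length `p`. -/
noncomputable def RW (W : List α) : ℕ := sInf {p : ℕ | ∀ u : List α, u.length = p → ¬ RightSpecial u W}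

/-- `K_W`: the length of the shortest suffix of `W` occurring exactly once in `W`. -/
noncomputable def KW (W : List α) : ℕ := sInf {k : ℕ | ∃ u : List α, u <:+ W ∧ u.length = k ∧ occ u W = 1}

/-- A word is trapezoidal if `|W| = R_W + K_W`. -/
def Trapezoidal (W : List α) : Prop := W.length = RW W + KW W

/-- The minimal period of `W`. -/
noncomputable def minPeriod (W : List α) : ℕ :=
  sInf {q : ℕ | 0 < q ∧ ∀ i : ℕ, i + q < W.length → W[i]? = W[i + q]?}

/-- A binary word is balanced if the number of occurrences of a letter in two
factors of equal length differ by at most 1. -/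
def BalancedWord (W : List Bool) : Prop :=
  ∀ u v : List Bool, u <:+: W → v <:+: W → u.length = v.length →
    u.count true ≤ v.count true + 1



lemma mem_factorFinset' {u W : List α} : u ∈ factorFinset W ↔ u <:+: W := by
  simp only [factorFinset, List.mem_toFinset, List.mem_flatMap, List.mem_inits, List.mem_tails]
  constructor
  · rintro ⟨t, htW, hut⟩
    exact hut.isInfix.trans htW.isInfix
  · rintro ⟨s, t, rfl⟩
    exact ⟨s ++ u, ⟨t, by simp [List.append_assoc]⟩, suffix_append s u⟩

lemma mem_palFactorFinset' {u W : List α} : u ∈ palFactorFinset W ↔ u <:+: W ∧ Pal u := by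
  simp [palFactorFinset, Finset.mem_filter, mem_factorFinset']

lemma suffix_of_new {q V : List α} (h1 : q <:+: V) (h2 : ¬ q <:+: V.dropLast) : q <:+ V := by
  obtain ⟨s, t, rfl⟩ := h1
  cases t with
  | nil => exact ⟨s, by simp⟩
  | cons a t' =>
    exfalso
    apply h2
    rw [List.dropLast_append_of_ne_nil (List.cons_ne_nil a t')]
    exact ⟨s, (a :: t').dropLast, rfl⟩

lemma pal_suffix_prefix {q Q : List α} (h : q <:+ Q) (hq : Pal q) (hQ : Pal Q) : q <+: Q := by
  have := List.reverse_prefix.mpr h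
  rwa [hq, hQ] at this

lemma pal_strict_infix_dropLast {q Q V : List α} (hsq : q <:+ Q) (hsQ : Q <:+ V)
    (pq : Pal q) (pQ : Pal Q) (hlt : q.length < Q.length) : q <:+: V.dropLast := by
  obtain ⟨t, rfl⟩ := (pal_suffix_prefix hsq pq pQ)
  obtain ⟨s, rfl⟩ := hsQ
  have htne : t ≠ [] := by
    intro h; rw [h] at hlt; simp at hlt
  rw [← List.append_assoc, List.dropLast_append_of_ne_nil htne]
  exact ⟨s, t.dropLast, rfl⟩

lemma palFactor_sdiff_card_le_one (V : List α) :
    (palFactorFinset V \ palFactorFinset V.dropLast).card ≤ 1 := by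
  rw [Finset.card_le_one]
  have key : ∀ a b : List α, a ∈ palFactorFinset V \ palFactorFinset V.dropLast →
      b ∈ palFactorFinset V \ palFactorFinset V.dropLast → a.length ≤ b.length → a = b := by
    intro a b ha hb hlen
    rw [Finset.mem_sdiff, mem_palFactorFinset', mem_palFactorFinset'] at ha hb
    obtain ⟨⟨hai, hap⟩, hanew⟩ := ha
    obtain ⟨⟨hbi, hbp⟩, hbnew⟩ := hb
    have hanew' : ¬ a <:+: V.dropLast := fun h => hanew ⟨h, hap⟩
    have hbnew' : ¬ b <:+: V.dropLast := fun h => hbnew ⟨h, hbp⟩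
    have hasuf : a <:+ V := suffix_of_new hai hanew'
    have hbsuf : b <:+ V := suffix_of_new hbi hbnew'
    have hab : a <:+ b := suffix_of_suffix_length_le hasuf hbsuf hlen
    rcases eq_or_lt_of_le hlen with heq | hlt
    · exact hab.eq_of_length heq
    · exact absurd (pal_strict_infix_dropLast hab hbsuf hap hbp hlt) hanew'
  intro a ha b hb
  rcases le_total a.length b.length with h | h
  · exact key a b ha hb h
  · exact (key b a hb ha h).symm

lemma palCard_le (V : List α) : (palFactorFinset V).card ≤ V.length + 1 := by
  induction V using List.reverseRecOn with
  | nil =>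
    have : palFactorFinset ([] : List α) ⊆ {[]} := by
      intro u hu
      rw [mem_palFactorFinset'] at hu
      simp [List.infix_nil.mp hu.1]
    calc (palFactorFinset ([] : List α)).card ≤ ({[]} : Finset (List α)).card :=
          Finset.card_le_card this
      _ ≤ 1 := by simp
      _ ≤ _ := by simp
  | append_singleton l a ih =>
    have hs := palFactor_sdiff_card_le_one (l ++ [a])
    have hbase := Finset.card_le_card_sdiff_add_card
      (s := palFactorFinset (l ++ [a])) (t := palFactorFinset (l ++ [a]).dropLast)
    rw [List.dropLast_concat] at hs hbase
    have : (palFactorFinset (l ++ [a])).card ≤ 1 + (l.length + 1) :=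
      le_trans hbase (Nat.add_le_add hs ih)
    simpa [Nat.add_comm] using this

lemma palFactor_mono {P V : List α} (h : P <+: V) : palFactorFinset P ⊆ palFactorFinset V := by
  intro q hq
  rw [mem_palFactorFinset'] at hq ⊢
  exact ⟨hq.1.trans h.isInfix, hq.2⟩

lemma palCard_prefix_le {P V : List α} (h : P <+: V) :
    (palFactorFinset V).card ≤ (palFactorFinset P).card + (V.length - P.length) := by
  induction V using List.reverseRecOn with
  | nil =>
    rw [List.prefix_nil.mp h]; simp
  | append_singleton l a ih =>
    have hlen : P.length ≤ l.length + 1 := by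
      have := h.length_le; simpa using this
    rcases Nat.lt_or_ge P.length (l.length + 1) with hlt | hge
    · have hPl : P <+: l := by
        have h1 : P = (l ++ [a]).take P.length := List.prefix_iff_eq_take.mp h
        rw [List.take_append,
          (by omega : P.length - l.length = 0), List.take_zero, List.append_nil] at h1
        rw [h1]; exact List.take_prefix _ _
      have hPll : P.length ≤ l.length := by omega
      have hs := palFactor_sdiff_card_le_one (l ++ [a])
      have hbase := Finset.card_le_card_sdiff_add_card
        (s := palFactorFinset (l ++ [a])) (t := palFactorFinset (l ++ [a]).dropLast)
      rw [List.dropLast_concat] at hs hbase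
      have hih := ih hPl
      have hll : (l ++ [a]).length = l.length + 1 := by simp
      omega
    · have : P = l ++ [a] := h.eq_of_length (by simpa using le_antisymm hlen hge)
      rw [this]; simp

lemma rich_prefix {W P : List α} (hrich : Rich W) (h : P <+: W) : Rich P := by
  have h1 := palCard_prefix_le h
  have h2 := palCard_le P
  have h3 := h.length_le
  unfold Rich at *
  omega

lemma exists_new_pal {W P : List α} (hrich : Rich W) (h : P <+: W) (hne : P ≠ []) :
    ∃ q, q <:+ P ∧ Pal q ∧ ¬ q <:+: P.dropLast := by
  have hP : Rich P := rich_prefix hrich h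
  have hlt : (palFactorFinset P.dropLast).card < (palFactorFinset P).card := by
    have h1 := palCard_le P.dropLast
    have h2 : P.dropLast.length = P.length - 1 := List.length_dropLast
    have h3 : 0 < P.length := List.length_pos_iff.mpr hne
    unfold Rich at hP
    omega
  have hnsub : ¬ palFactorFinset P ⊆ palFactorFinset P.dropLast := by
    intro hsub
    exact absurd (Finset.card_le_card hsub) (by omega)
  obtain ⟨q, hq, hqn⟩ := Finset.not_subset.mp hnsub
  rw [mem_palFactorFinset'] at hq
  have hqnew : ¬ q <:+: P.dropLast := fun hi => hqn (mem_palFactorFinset'.mpr ⟨hi, hq.2⟩)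
  exact ⟨q, suffix_of_new hq.1 hqnew, hq.2, hqnew⟩

lemma mem_occ_filter {u W : List α} {i : ℕ} :
    i ∈ (List.range (W.length + 1)).filter (fun i => u <+: W.drop i) ↔
      i ≤ W.length ∧ u <+: W.drop i := by
  simp [List.mem_filter, List.mem_range, Nat.lt_succ_iff]

lemma two_le_occ {u W : List α} {i j : ℕ} (hij : i ≠ j)
    (hi : i ≤ W.length) (hi2 : u <+: W.drop i)
    (hj : j ≤ W.length) (hj2 : u <+: W.drop j) : 2 ≤ occ u W := by
  set l := (List.range (W.length + 1)).filter (fun i => u <+: W.drop i) with hl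
  have hsub : ({i, j} : Finset ℕ) ⊆ l.toFinset := by
    intro x hx
    rw [List.mem_toFinset]
    rcases Finset.mem_insert.mp hx with rfl | hx
    · exact mem_occ_filter.mpr ⟨hi, hi2⟩
    · rw [Finset.mem_singleton] at hx
      subst hx
      exact mem_occ_filter.mpr ⟨hj, hj2⟩
  calc 2 = ({i, j} : Finset ℕ).card := (Finset.card_pair hij).symm
    _ ≤ l.toFinset.card := Finset.card_le_card hsub
    _ ≤ l.length := List.toFinset_card_le l
    _ = occ u W := rfl

lemma occ_le_one {u W : List α} {c : ℕ}
    (h : ∀ i, i ≤ W.length → u <+: W.drop i → i = c) : occ u W ≤ 1 := by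
  set l := (List.range (W.length + 1)).filter (fun i => u <+: W.drop i) with hl
  have hnd : l.Nodup := List.nodup_range.filter _
  have hsub : l.toFinset ⊆ {c} := by
    intro x hx
    rw [List.mem_toFinset] at hx
    obtain ⟨h1, h2⟩ := mem_occ_filter.mp hx
    simp [h x h1 h2]
  calc occ u W = l.toFinset.card := (List.toFinset_card_of_nodup hnd).symm
    _ ≤ ({c} : Finset ℕ).card := Finset.card_le_card hsub
    _ = 1 := Finset.card_singleton c

lemma one_le_occ {u W : List α} {i : ℕ} (hi : i ≤ W.length) (h2 : u <+: W.drop i) :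
    1 ≤ occ u W := by
  have : i ∈ (List.range (W.length + 1)).filter (fun i => u <+: W.drop i) :=
    mem_occ_filter.mpr ⟨hi, h2⟩
  exact List.length_pos_iff.mpr (List.ne_nil_of_mem this)

lemma drop_of_suffix {u W : List α} (h : u <:+ W) : W.drop (W.length - u.length) = u := by
  obtain ⟨s, rfl⟩ := h
  have : (s ++ u).length - u.length = s.length := by simp
  rw [this, List.drop_left]
set_option linter.unusedSectionVars false

theorem stmt17 {α : Type*} [DecidableEq α] (W U : List α) (h2 : 2 ≤ W.length)
    (hpal : Pal W) (hrich : Rich W)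
    (hUsuf : U <:+ W) (hUne : U ≠ W) (hUpal : Pal U)
    (hmax : ∀ u : List α, u <:+ W → u ≠ W → Pal u → u.length ≤ U.length) :
    (2 ≤ occ U W ∧ ∀ u : List α, u <:+ W → 2 ≤ occ u W → u.length ≤ U.length) ∧
      KW W = U.length + 1 := by
  set n := W.length with hn
  set k := U.length with hk
  have hkn : k ≤ n := hUsuf.length_le
  have hklt : k < n := by
    rcases lt_or_eq_of_le hkn with h | h
    · exact h
    · exact absurd (hUsuf.eq_of_length h) hUne
  have hUpre : U <+: W := by
    have := List.reverse_prefix.mpr hUsuf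
    rwa [hUpal, hpal] at this
  have hk1 : 1 ≤ k := by
    have hsuf : W.drop (n - 1) <:+ W := List.drop_suffix _ _
    have hlen : (W.drop (n - 1)).length = 1 := by
      rw [List.length_drop]; omega
    obtain ⟨a, ha⟩ := List.length_eq_one_iff.mp hlen
    have hpal1 : Pal (W.drop (n - 1)) := by rw [ha]; rfl
    have hne : W.drop (n - 1) ≠ W := by
      intro h
      rw [h] at hlen; omega
    have := hmax _ hsuf hne hpal1
    omega
  have hUtake : U = W.take k := List.prefix_iff_eq_take.mp hUpre
  have hdropU : W.drop (n - k) = U := drop_of_suffix hUsuf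
  -- Step 1: U occurs in W only at positions 0 and n - k
  have key : ∀ j, U <+: W.drop j → j ≤ n → j = 0 ∨ j = n - k := by
    intro j hj hjn
    by_contra hcon
    push_neg at hcon
    obtain ⟨hj0, hjnk⟩ := hcon
    have hjk : j + k ≤ n := by
      have := hj.length_le
      rw [List.length_drop] at this
      omega
    have hjkn : j + k < n := by omega
    set S : Set ℕ := {m | k < m ∧ m ≤ n ∧ U <:+ W.take m} with hS
    have hjS : j + k ∈ S := by
      refine ⟨by omega, by omega, ?_⟩
      have h1 : W.take (j + k) = W.take j ++ (W.drop j).take k := List.take_add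
      have h2 : (W.drop j).take k = U := by
        have := List.prefix_iff_eq_take.mp hj
        rw [← hk] at this
        exact this.symm
      rw [h1, h2]
      exact List.suffix_append _ _
    have hSne : S.Nonempty := ⟨j + k, hjS⟩
    set m := sInf S with hm
    obtain ⟨hkm, hmn, hUsufP⟩ := Nat.sInf_mem hSne
    have hmjk : m ≤ j + k := Nat.sInf_le hjS
    have hmltn : m < n := by omega
    set P := W.take m with hP
    have hPpre : P <+: W := List.take_prefix m W
    have hPlen : P.length = m := by
      rw [hP, List.length_take]; omega
    have hPne : P ≠ [] := by
      intro h
      rw [h] at hPlen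
      simp at hPlen
      omega
    obtain ⟨q, hqsuf, hqpal, hqnew⟩ := exists_new_pal hrich hPpre hPne
    have hkq : k ≤ q.length := by
      by_contra hlt
      push_neg at hlt
      have hqU : q <:+ U := List.suffix_of_suffix_length_le hqsuf hUsufP hlt.le
      exact hqnew (pal_strict_infix_dropLast hqU hUsufP hqpal hUpal hlt)
    have hUq : U <:+ q := List.suffix_of_suffix_length_le hUsufP hqsuf hkq
    have hUqpre : U <+: q := pal_suffix_prefix hUq hUpal hqpal
    obtain ⟨s, hsq⟩ := hqsuf
    have hslen : s.length + q.length = m := by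
      rw [← hPlen, ← hsq]; simp
    rcases eq_or_ne s [] with hs0 | hsne
    · -- q = P : P is a palindrome, contradiction with maximality of U
      have hqP : q = P := by rw [← hsq, hs0]; rfl
      have hPpal : Pal P := hqP ▸ hqpal
      have hPsufW : P <:+ W := by
        have := List.reverse_suffix.mpr hPpre
        rwa [hPpal, hpal] at this
      have hPneW : P ≠ W := by
        intro h
        rw [h] at hPlen
        omega
      have := hmax P hPsufW hPneW hPpal
      omega
    · -- s ≠ [] : minimality forces q = U, contradiction with U being a prefix
      have hslen0 : 0 < s.length := List.length_pos_iff.mpr hsne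
      have hskm : s.length + k ≤ m := by omega
      have hUsufM : U <:+ W.take (s.length + k) := by
        have h1 : W.take (s.length + k) = P.take (s.length + k) := by
          rw [hP, List.take_take]
          congr 1
          omega
        have h2 : P.take (s.length + k) = s ++ q.take k := by
          rw [← hsq, List.take_append,
            List.take_of_length_le (by omega : s.length ≤ s.length + k),
            (by omega : s.length + k - s.length = k)]
        have h3 : q.take k = U := by
          have := List.prefix_iff_eq_take.mp hUqpre
          rw [← hk] at this
          exact this.symm
        rw [h1, h2, h3]
        exact List.suffix_append _ _
      have hmem : s.length + k ∈ S := ⟨by omega, by omega, hUsufM⟩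
      have : m ≤ s.length + k := Nat.sInf_le hmem
      have hqk : q.length = k := by omega
      have hqU : q = U := (hUq.eq_of_length (by omega)).symm
      apply hqnew
      rw [hqU]
      have hUdl : U <+: P.dropLast := by
        have hdl : P.dropLast = W.take (m - 1) := by
          rw [List.dropLast_eq_take, hPlen, hP, List.take_take]
          congr 1
          omega
        rw [hdl]
        exact List.prefix_take_iff.mpr ⟨hUpre, by omega⟩
      exact hUdl.isInfix
  -- Step 2: 2 ≤ occ U W
  have hocc2 : 2 ≤ occ U W := by
    apply two_le_occ (i := 0) (j := n - k) (by omega) (by omega) _ (by omega) _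
    · rw [List.drop_zero]; exact hUpre
    · rw [hdropU]
  -- Step 3: repeated suffixes have length ≤ k
  have step3 : ∀ u : List α, u <:+ W → 2 ≤ occ u W → u.length ≤ k := by
    intro u husuf hocc
    by_contra hlen
    push_neg at hlen
    have hUu : U <:+ u := List.suffix_of_suffix_length_le hUsuf husuf hlen.le
    obtain ⟨t, ht⟩ := hUu
    have htlen : t.length + k = u.length := by rw [← ht]; simp [hk]
    have hule : u.length ≤ n := husuf.length_le
    have : occ u W ≤ 1 := by
      apply occ_le_one (c := n - u.length)
      intro i hi hpre
      have hilen : u.length ≤ n - i := by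
        have := hpre.length_le
        rwa [List.length_drop] at this
      obtain ⟨r, hr⟩ := hpre
      have hUdrop : U <+: W.drop (i + t.length) := by
        have hq : W.drop (i + t.length) = U ++ r := by
          rw [← List.drop_drop, ← hr, ← ht, List.append_assoc, List.drop_left]
        rw [hq]
        exact List.prefix_append _ _
      have := key (i + t.length) hUdrop (by omega)
      omega
    omega
  refine ⟨⟨hocc2, step3⟩, ?_⟩
  -- Step 4: KW W = k + 1
  have hmem : (k + 1) ∈ {k' : ℕ | ∃ u : List α, u <:+ W ∧ u.length = k' ∧ occ u W = 1} := by
    refine ⟨W.drop (n - (k + 1)), List.drop_suffix _ _, ?_, ?_⟩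
    · rw [List.length_drop]; omega
    · have hlen : (W.drop (n - (k + 1))).length = k + 1 := by
        rw [List.length_drop]; omega
      have h1 : 1 ≤ occ (W.drop (n - (k + 1))) W :=
        one_le_occ (by omega) List.prefix_rfl
      have h2 : occ (W.drop (n - (k + 1))) W ≤ 1 := by
        by_contra h
        push_neg at h
        have := step3 _ (List.drop_suffix _ _) h
        omega
      omega
  apply le_antisymm (Nat.sInf_le hmem)
  by_contra h
  push_neg at h
  obtain ⟨u, husuf, hulen, hocc⟩ := Nat.sInf_mem (⟨k + 1, hmem⟩ :
    Set.Nonempty {k' : ℕ | ∃ u : List α, u <:+ W ∧ u.length = k' ∧ occ u W = 1})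
  have hule : u.length ≤ k := by omega
  have hUu : u <:+ U := List.suffix_of_suffix_length_le husuf hUsuf hule
  obtain ⟨t, ht⟩ := hUu
  have htlen : t.length + u.length = k := by
    have := congrArg List.length ht
    simp only [List.length_append] at this
    omega
  obtain ⟨r, hr⟩ := hUpre
  have h1 : u <+: W.drop t.length := by
    have hq : W.drop t.length = u ++ r := by
      rw [← hr, ← ht, List.append_assoc, List.drop_left]
    rw [hq]
    exact List.prefix_append _ _
  have h2 : u <+: W.drop (n - u.length) := by
    rw [drop_of_suffix husuf]
  have : 2 ≤ occ u W := by
    apply two_le_occ (i := t.length) (j := n - u.length) (by omega) (by omega) h1 (by omega) h2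
  omega
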